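/- Let p be a prime and n ≥ 1. There exists a bijection B from the set {y ∈ [−1,1] : T_{p^n}(y) = y} of fixed points of the Chebyshev polynomial T_{p^n} on [−1,1] to the finite field F_{p^n} such that (B(y))^p = B(T_p(y)) for every y in that set. (Note that T_p maps this set into itself, since T_p ∘ T_{p^n} = T_{p^n} ∘ T_p.) -/

import Mathlib

open Polynomial Real

/-- `u + u⁻¹ = v + v⁻¹` iff `u = v` or `u = v⁻¹`, for units of a field. -/
private lemma add_inv_eq_iff {L : Type*} [Field L] (u v : Lˣ) :
    ((u : L) + ((u⁻¹ : Lˣ) : L) = (v : L) + ((v⁻¹ : Lˣ) : L)) ↔ (u = v ∨ u = v⁻¹) := by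
  constructor
  · intro h
    have hu : (u : L) * ((u⁻¹ : Lˣ) : L) = 1 := by exact_mod_cast u.mul_inv
    have hv : (v : L) * ((v⁻¹ : Lˣ) : L) = 1 := by exact_mod_cast v.mul_inv
    have h2 : ((u : L) - v) * (1 - ((u⁻¹ : Lˣ) : L) * ((v⁻¹ : Lˣ) : L)) = 0 := by
      linear_combination h - ((v⁻¹ : Lˣ) : L) * hu + ((u⁻¹ : Lˣ) : L) * hv
    rcases mul_eq_zero.1 h2 with h3 | h3
    · left; exact Units.ext (by rw [sub_eq_zero] at h3; exact_mod_cast h3)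
    · right
      have h5 : u⁻¹ * v⁻¹ = 1 := Units.ext (by
        rw [Units.val_mul, Units.val_one]; exact (sub_eq_zero.1 h3).symm)
      have h6 : u⁻¹ = v := by
        calc u⁻¹ = u⁻¹ * v⁻¹ * v := by group
        _ = v := by rw [h5, one_mul]
      rw [← h6, inv_inv]
  · rintro (rfl | rfl)
    · rfl
    · rw [inv_inv]; exact add_comm _ _

/-- quadratic `X^2 - x X + 1` has roots exactly `u` and `x - u`. -/
private lemma quad_roots {F : Type*} [Field F] {x u v : F}
    (hu : u ^ 2 - x * u + 1 = 0) (hv : v ^ 2 - x * v + 1 = 0) : v = u ∨ v = x - u := by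
  have h : (v - u) * (v - (x - u)) = 0 := by linear_combination hv - hu
  rcases mul_eq_zero.1 h with h | h
  · left; exact sub_eq_zero.1 h
  · right; exact sub_eq_zero.1 h

/-- applying Frobenius to a root of the quadratic gives a root. -/
private lemma quad_root_frob {F : Type*} [Field F] (p m : ℕ) [Fact p.Prime] [CharP F p]
    {x u : F} (hx : x ^ p ^ m = x) (hu : u ^ 2 - x * u + 1 = 0) :
    (u ^ p ^ m) ^ 2 - x * (u ^ p ^ m) + 1 = 0 := by
  have h0 : (u ^ 2 - x * u + 1) ^ p ^ m = 0 := by rw [hu, zero_pow (pow_ne_zero m (Fact.out : p.Prime).ne_zero)]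
  calc (u ^ p ^ m) ^ 2 - x * (u ^ p ^ m) + 1
      = ((u ^ 2 + 1) - x * u) ^ p ^ m := by
        rw [sub_pow_char_pow, add_pow_char_pow, mul_pow, hx, one_pow, ← pow_mul, ← pow_mul',
          sub_add_eq_add_sub]
    _ = 0 := by rw [show (u ^ 2 + 1) - x * u = u ^ 2 - x * u + 1 by ring, h0]

/-- comparing angles: `cos(2πk/A) = cos(2πl/B)` iff integral divisibility. -/
private lemma cos_div_eq_iff {A B : ℤ} (hA : 0 < A) (hB : 0 < B) (k l : ℤ) :
    Real.cos (2 * π * k / A) = Real.cos (2 * π * l / B) ↔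
      ((A * B) ∣ (l * A - k * B) ∨ (A * B) ∣ (l * A + k * B)) := by
  have hA0 : (A : ℝ) ≠ 0 := Int.cast_ne_zero.2 hA.ne'
  have hB0 : (B : ℝ) ≠ 0 := Int.cast_ne_zero.2 hB.ne'
  have h2π : (2 * π : ℝ) ≠ 0 := by positivity
  rw [Real.cos_eq_cos_iff]
  constructor
  · rintro ⟨j, hj | hj⟩
    · left
      refine ⟨j, ?_⟩
      have h1 : (2 * π) * (((l : ℝ) * A - k * B)) = (2 * π) * ((A * B) * j) := by
        field_simp at hj
        linear_combination (2 * π) * hj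
      have h2 := mul_left_cancel₀ h2π h1
      exact_mod_cast h2
    · right
      refine ⟨j, ?_⟩
      have h1 : (2 * π) * (((l : ℝ) * A + k * B)) = (2 * π) * ((A * B) * j) := by
        field_simp at hj
        linear_combination (2 * π) * hj
      have h2 := mul_left_cancel₀ h2π h1
      exact_mod_cast h2
  · rintro (⟨j, hj⟩ | ⟨j, hj⟩)
    · refine ⟨j, Or.inl ?_⟩
      have h1 : ((l : ℝ) * A - k * B) = (A * B) * j := by exact_mod_cast congrArg (Int.cast : ℤ → ℝ) hj
      field_simp
      linear_combination h1
    · refine ⟨j, Or.inr ?_⟩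
      have h1 : ((l : ℝ) * A + k * B) = (A * B) * j := by exact_mod_cast congrArg (Int.cast : ℤ → ℝ) hj
      field_simp
      linear_combination h1

open Polynomial.Chebyshev

private noncomputable def mm (q : ℕ) : Bool → ℤ := fun b => bif b then (q : ℤ) + 1 else (q : ℤ) - 1

private noncomputable def rr (q : ℕ) : ℤ × Bool → ℝ :=
  fun a => Real.cos (2 * π * a.1 / ((mm q a.2 : ℤ) : ℝ))

private lemma mm_pos {q : ℕ} (hq : 2 ≤ q) (b : Bool) : 0 < mm q b := by
  have : (2 : ℤ) ≤ (q : ℤ) := by exact_mod_cast hq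
  cases b <;> simp [mm] <;> omega

private lemma rr_mem (q : ℕ) (hq : 2 ≤ q) (a : ℤ × Bool) :
    rr q a ∈ Set.Icc (-1 : ℝ) 1 ∧ (T ℝ (q : ℤ)).eval (rr q a) = rr q a := by
  obtain ⟨k, b⟩ := a
  have hq1 : (1 : ℝ) < (q : ℝ) := by exact_mod_cast lt_of_lt_of_le one_lt_two hq
  refine ⟨⟨Real.neg_one_le_cos _, Real.cos_le_one _⟩, ?_⟩
  show (T ℝ (q : ℤ)).eval (Real.cos _) = _
  rw [T_real_cos]
  cases b
  · -- m = q - 1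
    have hcast : ((mm q false : ℤ) : ℝ) = (q : ℝ) - 1 := by simp [mm]
    have hne : (q : ℝ) - 1 ≠ 0 := by linarith
    have hθ : (q : ℤ) * (2 * π * k / ((mm q false : ℤ) : ℝ)) =
        2 * π * k / ((mm q false : ℤ) : ℝ) + (k : ℤ) * (2 * π) := by
      rw [hcast]; field_simp; push_cast; ring
    show Real.cos _ = Real.cos _
    rw [show ((q : ℤ) : ℝ) * (2 * π * k / ((mm q false : ℤ) : ℝ)) =
      (q : ℤ) * (2 * π * k / ((mm q false : ℤ) : ℝ)) from by push_cast; ring, hθ,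
      Real.cos_add_int_mul_two_pi]
  · -- m = q + 1
    have hcast : ((mm q true : ℤ) : ℝ) = (q : ℝ) + 1 := by simp [mm]
    have hne : (q : ℝ) + 1 ≠ 0 := by linarith
    have hθ : (q : ℤ) * (2 * π * k / ((mm q true : ℤ) : ℝ)) =
        -(2 * π * k / ((mm q true : ℤ) : ℝ)) + (k : ℤ) * (2 * π) := by
      rw [hcast]; field_simp; push_cast; ring
    show Real.cos _ = Real.cos _
    rw [show ((q : ℤ) : ℝ) * (2 * π * k / ((mm q true : ℤ) : ℝ)) =
      (q : ℤ) * (2 * π * k / ((mm q true : ℤ) : ℝ)) from by push_cast; ring, hθ,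
      Real.cos_add_int_mul_two_pi, Real.cos_neg]

private lemma rr_surj (q : ℕ) (hq : 2 ≤ q) {y : ℝ} (h1 : y ∈ Set.Icc (-1 : ℝ) 1)
    (h2 : (T ℝ (q : ℤ)).eval y = y) : ∃ a, rr q a = y := by
  have hq1 : (1 : ℝ) < (q : ℝ) := by exact_mod_cast lt_of_lt_of_le one_lt_two hq
  set θ := Real.arccos y with hθdef
  have hycos : Real.cos θ = y := Real.cos_arccos h1.1 h1.2
  rw [← hycos] at h2
  rw [T_real_cos] at h2
  rw [hycos] at h2
  rw [← hycos] at h2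
  -- h2 : cos (q * θ) = cos θ
  obtain ⟨j, hj | hj⟩ := Real.cos_eq_cos_iff.1 h2
  · -- θ = 2jπ + qθ
    refine ⟨(-j, false), ?_⟩
    have hcast : ((mm q false : ℤ) : ℝ) = (q : ℝ) - 1 := by simp [mm]
    have hne : (q : ℝ) - 1 ≠ 0 := by linarith
    have hθeq : 2 * π * ((-j : ℤ) : ℝ) / ((q : ℝ) - 1) = θ := by
      field_simp
      push_cast at hj ⊢
      linarith [hj]
    show Real.cos _ = y
    rw [hcast, hθeq, hycos]
  · -- θ = 2jπ - qθ
    refine ⟨(j, true), ?_⟩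
    have hcast : ((mm q true : ℤ) : ℝ) = (q : ℝ) + 1 := by simp [mm]
    have hne : (q : ℝ) + 1 ≠ 0 := by linarith
    have hθeq : 2 * π * ((j : ℤ) : ℝ) / ((q : ℝ) + 1) = θ := by
      field_simp
      push_cast at hj ⊢
      linarith [hj]
    show Real.cos _ = y
    rw [hcast, hθeq, hycos]

private lemma rr_frob (q : ℕ) (pp : ℕ) (a : ℤ × Bool) :
    (T ℝ (pp : ℤ)).eval (rr q a) = rr q (pp * a.1, a.2) := by
  obtain ⟨k, b⟩ := a
  show (T ℝ (pp : ℤ)).eval (Real.cos _) = Real.cos _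
  rw [T_real_cos]
  congr 1
  push_cast
  ring


private noncomputable def ww {L : Type*} [Field L] (q : ℕ) (g : Lˣ) : ℤ × Bool → Lˣ :=
  fun a => g ^ (mm q (!a.2) * a.1)

private noncomputable def cc {L : Type*} [Field L] (q : ℕ) (g : Lˣ) : ℤ × Bool → L :=
  fun a => ((ww q g a : Lˣ) : L) + (((ww q g a)⁻¹ : Lˣ) : L)

private lemma natCast_sq_sub_one (q : ℕ) (hq : 2 ≤ q) : ((q ^ 2 - 1 : ℕ) : ℤ) = (q : ℤ) ^ 2 - 1 := by
  have h1 : 1 ≤ q ^ 2 := Nat.one_le_pow _ _ (by omega)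
  rw [Nat.cast_sub h1, Nat.cast_pow, Nat.cast_one]

private lemma gpow_iff {G : Type*} [Group G] {g : G} {q : ℕ} (hq : 2 ≤ q)
    (hgord : orderOf g = q ^ 2 - 1) (s t : ℤ) :
    g ^ s = g ^ t ↔ ((q : ℤ) ^ 2 - 1) ∣ s - t := by
  rw [zpow_eq_zpow_iff_modEq, hgord, Int.modEq_iff_dvd, natCast_sq_sub_one q hq, dvd_sub_comm]

private lemma dvd_bridge {A B k l : ℤ} (hA : A ≠ 0) (hB : B ≠ 0) :
    (A * A ∣ l * A - k * A ∨ A * A ∣ l * A + k * A) ↔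
      (B * A ∣ B * k - B * l ∨ B * A ∣ B * k + B * l) := by
  rw [show l * A - k * A = A * (l - k) by ring, show l * A + k * A = A * (l + k) by ring,
    show B * k - B * l = B * (k - l) by ring, show B * k + B * l = B * (k + l) by ring,
    mul_dvd_mul_iff_left hA, mul_dvd_mul_iff_left hA, mul_dvd_mul_iff_left hB,
    mul_dvd_mul_iff_left hB, show k - l = -(l - k) by ring, dvd_neg, add_comm k l]

private lemma dvd_bridge' {A B k l : ℤ} :
    (A * B ∣ l * A - k * B ∨ A * B ∣ l * A + k * B) ↔
      (B * A ∣ B * k - A * l ∨ B * A ∣ B * k + A * l) := by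
  rw [show (A * B : ℤ) = B * A by ring, show l * A - k * B = -(B * k - A * l) by ring,
    dvd_neg, show l * A + k * B = B * k + A * l by ring]

private lemma rr_eq_iff {q : ℕ} (hq : 2 ≤ q) (a a' : ℤ × Bool) :
    rr q a = rr q a' ↔
    (mm q a.2 * mm q a'.2 ∣ a'.1 * mm q a.2 - a.1 * mm q a'.2 ∨
     mm q a.2 * mm q a'.2 ∣ a'.1 * mm q a.2 + a.1 * mm q a'.2) :=
  cos_div_eq_iff (mm_pos hq a.2) (mm_pos hq a'.2) a.1 a'.1

private lemma cc_eq_iff {L : Type*} [Field L] {q : ℕ} (hq : 2 ≤ q) {g : Lˣ}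
    (hgord : orderOf g = q ^ 2 - 1) (a a' : ℤ × Bool) :
    cc q g a = cc q g a' ↔
      (((q : ℤ) ^ 2 - 1) ∣ mm q (!a.2) * a.1 - mm q (!a'.2) * a'.1 ∨
       ((q : ℤ) ^ 2 - 1) ∣ mm q (!a.2) * a.1 + mm q (!a'.2) * a'.1) := by
  have hinv : (ww q g a')⁻¹ = g ^ (-(mm q (!a'.2) * a'.1)) := by
    rw [ww, zpow_neg]
  rw [show cc q g a = cc q g a' ↔ (ww q g a = ww q g a' ∨ ww q g a = (ww q g a')⁻¹) from
    add_inv_eq_iff _ _, hinv, ww, ww, gpow_iff hq hgord, gpow_iff hq hgord, sub_neg_eq_add]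

private lemma cc_key {L : Type*} [Field L] {q : ℕ} (hq : 2 ≤ q) {g : Lˣ}
    (hgord : orderOf g = q ^ 2 - 1) (a a' : ℤ × Bool) :
    rr q a = rr q a' ↔ cc q g a = cc q g a' := by
  have hq2 : (2:ℤ) ≤ (q:ℤ) := by exact_mod_cast hq
  have hA : ((q : ℤ) - 1) ≠ 0 := by omega
  have hB : ((q : ℤ) + 1) ≠ 0 := by omega
  rw [rr_eq_iff hq, cc_eq_iff hq hgord]
  obtain ⟨k, b⟩ := a
  obtain ⟨l, d⟩ := a'
  cases b <;> cases d <;>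
    simp only [mm, Bool.not_false, Bool.not_true, Bool.cond_false, Bool.cond_true, cond]
  · rw [show ((q:ℤ)^2 - 1) = ((q:ℤ)+1) * ((q:ℤ)-1) by ring]
    exact dvd_bridge hA hB
  · rw [show ((q:ℤ)^2 - 1) = ((q:ℤ)+1) * ((q:ℤ)-1) by ring]
    exact dvd_bridge'
  · rw [show ((q:ℤ)^2 - 1) = ((q:ℤ)-1) * ((q:ℤ)+1) by ring]
    exact dvd_bridge'
  · rw [show ((q:ℤ)^2 - 1) = ((q:ℤ)-1) * ((q:ℤ)+1) by ring]
    exact dvd_bridge hB hA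

private lemma ww_cycle {L : Type*} [Field L] {q : ℕ} (hq : 2 ≤ q) {g : Lˣ}
    (hgord : orderOf g = q ^ 2 - 1) (a : ℤ × Bool) :
    ww q g a ^ ((q : ℤ) - 1) = 1 ∨ ww q g a ^ ((q : ℤ) + 1) = 1 := by
  obtain ⟨k, b⟩ := a
  cases b
  · left
    show (g ^ (mm q true * k)) ^ ((q : ℤ) - 1) = 1
    rw [← zpow_mul, ← orderOf_dvd_iff_zpow_eq_one, hgord, natCast_sq_sub_one q hq]
    exact ⟨k, by simp only [mm, cond]; ring⟩
  · right
    show (g ^ (mm q false * k)) ^ ((q : ℤ) + 1) = 1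
    rw [← zpow_mul, ← orderOf_dvd_iff_zpow_eq_one, hgord, natCast_sq_sub_one q hq]
    exact ⟨k, by simp only [mm, cond]; ring⟩

private lemma ww_pow_q {L : Type*} [Field L] {q : ℕ} (hq : 2 ≤ q) {g : Lˣ}
    (hgord : orderOf g = q ^ 2 - 1) (a : ℤ × Bool) :
    ww q g a ^ q = ww q g a ∨ ww q g a ^ q = (ww q g a)⁻¹ := by
  have hz : ww q g a ^ q = ww q g a ^ ((q : ℕ) : ℤ) := (zpow_natCast _ _).symm
  rcases ww_cycle hq hgord a with h | h
  · left
    rw [hz, show ((q : ℕ) : ℤ) = ((q : ℤ) - 1) + 1 by ring, zpow_add, h, one_mul, zpow_one]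
  · right
    rw [hz, show ((q : ℕ) : ℤ) = ((q : ℤ) + 1) + (-1) by ring, zpow_add, h, one_mul, zpow_neg_one]

private lemma cc_mem {L : Type*} [Field L] (p n : ℕ) [Fact p.Prime] [CharP L p]
    (hq : 2 ≤ p ^ n) {g : Lˣ} (hgord : orderOf g = (p ^ n) ^ 2 - 1) (a : ℤ × Bool) :
    cc (p ^ n) g a ^ p ^ n = cc (p ^ n) g a := by
  have key : (cc (p ^ n) g a) ^ p ^ n =
      ((ww (p ^ n) g a ^ (p ^ n) : Lˣ) : L) +
        (((ww (p ^ n) g a ^ (p ^ n))⁻¹ : Lˣ) : L) := by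
    rw [cc, add_pow_char_pow]
    simp [zpow_natCast, Units.val_pow_eq_pow_val, inv_pow]
  rcases ww_pow_q hq hgord a with h | h
  · rw [key, h]; rfl
  · rw [key, h, inv_inv]
    exact add_comm _ _

private lemma cc_frob {L : Type*} [Field L] (p : ℕ) [Fact p.Prime] [CharP L p] (q : ℕ)
    (g : Lˣ) (a : ℤ × Bool) :
    cc q g ((p : ℤ) * a.1, a.2) = (cc q g a) ^ p := by
  have hw : ww q g ((p : ℤ) * a.1, a.2) = ww q g a ^ (p : ℕ) := by
    show g ^ (mm q (!a.2) * ((p : ℤ) * a.1)) = (g ^ (mm q (!a.2) * a.1)) ^ (p : ℕ)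
    rw [← zpow_natCast, ← zpow_mul]
    congr 1
    ring
  rw [cc, cc, add_pow_char, hw]
  simp [Units.val_pow_eq_pow_val, inv_pow]

private def fixedSubfield (L : Type*) [Field L] (p n : ℕ) [Fact p.Prime] [CharP L p] :
    Subfield L where
  carrier := {x | x ^ p ^ n = x}
  mul_mem' := by
    intro a b ha hb
    simp only [Set.mem_setOf_eq] at *
    rw [mul_pow, ha, hb]
  one_mem' := by simp
  add_mem' := by
    intro a b ha hb
    simp only [Set.mem_setOf_eq] at *
    rw [add_pow_char_pow, ha, hb]
  zero_mem' := by
    simp only [Set.mem_setOf_eq]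
    exact zero_pow (pow_ne_zero _ (Fact.out : p.Prime).ne_zero)
  neg_mem' := by
    intro a ha
    simp only [Set.mem_setOf_eq] at *
    rw [show (-a : L) = 0 - a by ring, sub_pow_char_pow, ha,
      zero_pow (pow_ne_zero _ (Fact.out : p.Prime).ne_zero), zero_sub]
  inv_mem' := by
    intro a ha
    simp only [Set.mem_setOf_eq] at *
    rw [inv_pow, ha]

private lemma mem_fixedSubfield {L : Type*} [Field L] {p n : ℕ} [Fact p.Prime] [CharP L p]
    (x : L) : x ∈ fixedSubfield L p n ↔ x ^ p ^ n = x := Iff.rfl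

private lemma P2_facts {L : Type*} [Field L] [Fintype L] {q : ℕ} (hq : 2 ≤ q)
    (hcard : Fintype.card L = q ^ 2) :
    (X ^ q ^ 2 - X : L[X]).Monic ∧ Splits (X ^ q ^ 2 - X : L[X]) ∧
      (X ^ q ^ 2 - X : L[X]).roots = Finset.univ.val := by
  have h1 : 1 < q ^ 2 := by nlinarith
  have hroots : (X ^ q ^ 2 - X : L[X]).roots = Finset.univ.val := by
    have h := FiniteField.roots_X_pow_card_sub_X L
    rwa [hcard] at h
  have hmonic : Monic (X ^ q ^ 2 - X : L[X]) :=
    monic_X_pow_sub (by rw [degree_X]; exact_mod_cast h1)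
  have hdeg : (X ^ q ^ 2 - X : L[X]).natDegree = q ^ 2 :=
    FiniteField.X_pow_card_sub_X_natDegree_eq L h1
  have hsplits : Splits (X ^ q ^ 2 - X : L[X]) := by
    rw [splits_iff_card_roots, hroots, hdeg]
    simpa using hcard
  exact ⟨hmonic, hsplits, hroots⟩

private lemma card_fixedSubfield {L : Type*} [Field L] [Fintype L] (p n : ℕ) [Fact p.Prime]
    [CharP L p] (hq : 2 ≤ p ^ n) (hn : n ≠ 0) (hcard : Fintype.card L = (p ^ n) ^ 2) :
    Nat.card (fixedSubfield L p n) = p ^ n := by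
  set q := p ^ n with hqdef
  obtain ⟨hmonic, hsplits, hroots⟩ := P2_facts hq hcard
  have h1q : 1 < q := by omega
  obtain ⟨s, hs⟩ : ∃ s, q = s + 1 := ⟨q - 1, by omega⟩
  have hdvd : (X ^ q - X : L[X]) ∣ (X ^ q ^ 2 - X) := by
    have h2 : (X ^ s - 1 : L[X]) ∣ (X ^ (s * (s + 2)) - 1) :=
      pow_one_sub_dvd_pow_mul_sub_one X s (s + 2)
    have h3 := mul_dvd_mul_left (X : L[X]) h2
    have e1 : (X : L[X]) * (X ^ s - 1) = X ^ q - X := by rw [hs]; ring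
    have e2 : (X : L[X]) * (X ^ (s * (s + 2)) - 1) = X ^ q ^ 2 - X := by
      rw [show q ^ 2 = s * (s + 2) + 1 from by rw [hs]; ring]; ring
    rwa [e1, e2] at h3
  have hsplits0 : Splits (X ^ q - X : L[X]) :=
    Splits.of_dvd hsplits hmonic.ne_zero hdvd
  have hsep : (X ^ q - X : L[X]).Separable :=
    galois_poly_separable p q (hqdef ▸ dvd_pow_self p hn)
  have hne0 : (X ^ q - X : L[X]) ≠ 0 :=
    (monic_X_pow_sub (by rw [degree_X]; exact_mod_cast h1q)).ne_zero
  have hdeg : (X ^ q - X : L[X]).natDegree = q := FiniteField.X_pow_card_sub_X_natDegree_eq L h1q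
  have hcardroots : Multiset.card (X ^ q - X : L[X]).roots = q := by
    rw [splits_iff_card_roots.1 hsplits0, hdeg]
  letI : DecidableEq L := Classical.decEq L
  have hsetff : ((fixedSubfield L p n : Set L)) = ((X ^ q - X : L[X]).roots.toFinset : Set L) := by
    ext z
    simp only [SetLike.mem_coe, mem_fixedSubfield, Finset.coe_sort_coe, Finset.mem_coe,
      Multiset.mem_toFinset, mem_roots hne0, IsRoot.def, eval_sub, eval_pow, eval_X,
      sub_eq_zero]
    rw [hqdef]
  rw [← SetLike.coe_sort_coe, Nat.card_coe_set_eq, hsetff, Set.ncard_coe_finset,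
    Multiset.toFinset_card_of_nodup (nodup_roots hsep), hcardroots]

private lemma cc_surj {L : Type*} [Field L] [Fintype L] (p n : ℕ) [Fact p.Prime] [CharP L p]
    (hq : 2 ≤ p ^ n) (hcard : Fintype.card L = (p ^ n) ^ 2) {g : Lˣ}
    (hgmem : ∀ x : Lˣ, x ∈ Subgroup.zpowers g) {x : L} (hx : x ^ p ^ n = x) :
    ∃ a, cc (p ^ n) g a = x := by
  have hq2Z : (2 : ℤ) ≤ ((p ^ n : ℕ) : ℤ) := by exact_mod_cast hq
  have hgord : orderOf g = (p ^ n) ^ 2 - 1 := by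
    rw [orderOf_eq_card_of_forall_mem_zpowers hgmem, Nat.card_units, Nat.card_eq_fintype_card,
      hcard]
  obtain ⟨hmonic, hsplits, hroots⟩ := P2_facts hq hcard
  set f : L[X] := X ^ 2 - C x * X + 1 with hfdef
  have hfmonic : f.Monic := by
    have h : f = X ^ 2 + (1 - C x * X) := by rw [hfdef]; ring
    rw [h]
    apply monic_X_pow_add
    refine lt_of_le_of_lt (degree_sub_le _ _) ?_
    rw [max_lt_iff]
    constructor
    · exact lt_of_le_of_lt degree_one_le (by norm_num)
    · refine lt_of_le_of_lt (degree_mul_le _ _) ?_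
      refine lt_of_le_of_lt (add_le_add degree_C_le (le_of_eq degree_X)) ?_
      norm_num
  have hfdeg : f.degree = 2 := by
    rw [hfdef]
    compute_degree!
  haveI : CharP f.SplittingField p :=
    charP_of_injective_algebraMap (algebraMap L f.SplittingField).injective p
  obtain ⟨u, hu⟩ := Splits.exists_eval_eq_zero
    (SplittingField.splits f) (by rw [degree_map, hfdeg]; norm_num)
  rw [eval_map] at hu
  let E := f.SplittingField
  let φ : L →+* E := algebraMap L E
  have hu' : u ^ 2 - (φ x) * u + 1 = 0 := by
    have h := hu
    simp only [hfdef, eval₂_add, eval₂_sub, eval₂_mul, eval₂_pow, eval₂_X, eval₂_C,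
      eval₂_one] at h
    exact h
  have hxE : (φ x) ^ p ^ n = φ x := by rw [← map_pow, hx]
  have huq : u ^ (p ^ n) ^ 2 = u := by
    have h1 := quad_root_frob p n hxE hu'
    rcases quad_roots hu' h1 with h2 | h2
    · rw [sq, pow_mul, h2, h2]
    · rw [sq, pow_mul, h2, sub_pow_char_pow, hxE, h2]
      ring
  have hfact := hsplits.eq_prod_roots_of_monic hmonic
  have hev : (Polynomial.aeval u) (X ^ (p ^ n) ^ 2 - X : L[X]) = 0 := by
    simp only [map_sub, map_pow, aeval_X]
    rw [huq, sub_self]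
  rw [hfact, map_multiset_prod, Multiset.map_map] at hev
  have h0 : (0 : E) ∈ Multiset.map ((Polynomial.aeval u) ∘ fun a => X - C a)
      (X ^ (p ^ n) ^ 2 - X : L[X]).roots := Multiset.prod_eq_zero_iff.1 hev
  obtain ⟨y, hy, hy0⟩ := Multiset.mem_map.1 h0
  have huy : u = φ y := by
    have h : u - φ y = 0 := by
      have := hy0
      simp only [Function.comp_apply, map_sub, aeval_X, Polynomial.aeval_C] at this
      exact this.symm ▸ rfl
    exact sub_eq_zero.1 h
  have hy2 : y ^ 2 - x * y + 1 = 0 := by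
    have hφ0 : φ (y ^ 2 - x * y + 1) = 0 := by
      rw [map_add, map_sub, map_mul, map_pow, map_one, ← huy]
      exact hu'
    exact (_root_.map_eq_zero φ).1 hφ0
  have hinv1 : y * (x - y) = 1 := by linear_combination -hy2
  have hinv2 : (x - y) * y = 1 := by linear_combination -hy2
  set V : Lˣ := ⟨y, x - y, hinv1, hinv2⟩ with hVdef
  obtain ⟨j, hj⟩ := Subgroup.mem_zpowers_iff.1 (hgmem V)
  have hyq := quad_root_frob p n hx hy2
  rcases quad_roots hy2 hyq with h | h
  · -- y ^ q = y
    have hVpow : V ^ ((p ^ n : ℕ) : ℤ) = V := by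
      rw [zpow_natCast]
      exact Units.ext (by rw [Units.val_pow_eq_pow_val]; exact h)
    have hVq : g ^ (j * ((p ^ n : ℕ) : ℤ)) = g ^ j := by
      calc g ^ (j * ((p ^ n : ℕ) : ℤ)) = (g ^ j) ^ ((p ^ n : ℕ) : ℤ) := by rw [zpow_mul]
      _ = V ^ ((p ^ n : ℕ) : ℤ) := by rw [hj]
      _ = V := hVpow
      _ = g ^ j := hj.symm
    have hdvd1 : ((p ^ n : ℕ) : ℤ) + 1 ∣ j := by
      have h3 := (gpow_iff hq hgord _ _).1 hVq
      rw [show (j * ((p ^ n : ℕ) : ℤ) - j) = (((p ^ n : ℕ) : ℤ) - 1) * j from by ring,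
        show (((p ^ n : ℕ) : ℤ) ^ 2 - 1) = (((p ^ n : ℕ) : ℤ) - 1) * (((p ^ n : ℕ) : ℤ) + 1)
          from by ring,
        mul_dvd_mul_iff_left (show (((p ^ n : ℕ) : ℤ) - 1) ≠ 0 from by omega)] at h3
      exact h3
    obtain ⟨k, hk⟩ := hdvd1
    refine ⟨(k, false), ?_⟩
    have hwV : ww (p ^ n) g (k, false) = V := by
      show g ^ (mm (p ^ n) (!false) * k) = V
      rw [show mm (p ^ n) (!false) = ((p ^ n : ℕ) : ℤ) + 1 from rfl, ← hk, hj]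
    rw [cc, hwV]
    show y + ((V⁻¹ : Lˣ) : L) = x
    rw [show ((V⁻¹ : Lˣ) : L) = x - y from rfl]
    ring
  · -- y ^ q = x - y
    have hVpow : V ^ ((p ^ n : ℕ) : ℤ) = V⁻¹ := by
      rw [zpow_natCast]
      exact Units.ext (by rw [Units.val_pow_eq_pow_val]; exact h)
    have hVq : g ^ (j * ((p ^ n : ℕ) : ℤ)) = g ^ (-j) := by
      calc g ^ (j * ((p ^ n : ℕ) : ℤ)) = (g ^ j) ^ ((p ^ n : ℕ) : ℤ) := by rw [zpow_mul]
      _ = V ^ ((p ^ n : ℕ) : ℤ) := by rw [hj]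
      _ = V⁻¹ := hVpow
      _ = g ^ (-j) := by rw [zpow_neg, hj]
    have hdvd1 : ((p ^ n : ℕ) : ℤ) - 1 ∣ j := by
      have h3 := (gpow_iff hq hgord _ _).1 hVq
      rw [sub_neg_eq_add,
        show (j * ((p ^ n : ℕ) : ℤ) + j) = (((p ^ n : ℕ) : ℤ) + 1) * j from by ring,
        show (((p ^ n : ℕ) : ℤ) ^ 2 - 1) = (((p ^ n : ℕ) : ℤ) + 1) * (((p ^ n : ℕ) : ℤ) - 1)
          from by ring,
        mul_dvd_mul_iff_left (show (((p ^ n : ℕ) : ℤ) + 1) ≠ 0 from by omega)] at h3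
      exact h3
    obtain ⟨k, hk⟩ := hdvd1
    refine ⟨(k, true), ?_⟩
    have hwV : ww (p ^ n) g (k, true) = V := by
      show g ^ (mm (p ^ n) (!true) * k) = V
      rw [show mm (p ^ n) (!true) = ((p ^ n : ℕ) : ℤ) - 1 from rfl, ← hk, hj]
    rw [cc, hwV]
    show y + ((V⁻¹ : Lˣ) : L) = x
    rw [show ((V⁻¹ : Lˣ) : L) = x - y from rfl]
    ring

private lemma charP_subfield {L : Type*} [Field L] (p : ℕ) [CharP L p] (S : Subfield L) :
    CharP S p := by
  constructor
  intro x
  rw [← CharP.cast_eq_zero_iff L p x, ← map_natCast S.subtype x]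
  exact ⟨fun h => by rw [h, map_zero], fun h => S.subtype.injective (by rw [map_zero]; exact h)⟩

set_option maxHeartbeats 2000000 in
open Polynomial.Chebyshev in
/-- There is a bijection `B` from the fixed points of the Chebyshev polynomial `T_{p^n}`
on `[−1,1]` to `F_{p^n}` such that `(B(y))^p = B(T_p(y))` for every such fixed point. -/
theorem exists_bijection_chebyshev_fixedPoints (p n : ℕ) [Fact p.Prime] (hn : 1 ≤ n) :
    ∃ B : ℝ → GaloisField p n,
      Set.BijOn B {y ∈ Set.Icc (-1 : ℝ) 1 | (T ℝ (p ^ n : ℕ)).eval y = y} Set.univ ∧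
      ∀ y ∈ {y ∈ Set.Icc (-1 : ℝ) 1 | (T ℝ (p ^ n : ℕ)).eval y = y},
        B y ^ p = B ((T ℝ p).eval y) := by
  classical
  have hp2 : 2 ≤ p := (Fact.out : p.Prime).two_le
  have hq : 2 ≤ p ^ n := le_trans hp2 (by
    calc p = p ^ 1 := (pow_one p).symm
    _ ≤ p ^ n := Nat.pow_le_pow_right (by omega) hn)
  haveI : Fintype (GaloisField p (2 * n)) := Fintype.ofFinite _
  have hcard : Fintype.card (GaloisField p (2 * n)) = (p ^ n) ^ 2 := by
    rw [← Nat.card_eq_fintype_card, GaloisField.card p (2 * n) (by omega), mul_comm 2 n, pow_mul]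
  obtain ⟨g, hgmem⟩ := IsCyclic.exists_generator (α := (GaloisField p (2 * n))ˣ)
  have hgord : orderOf g = (p ^ n) ^ 2 - 1 := by
    rw [orderOf_eq_card_of_forall_mem_zpowers hgmem, Nat.card_units, Nat.card_eq_fintype_card,
      hcard]
  haveI : Fintype (GaloisField p n) := Fintype.ofFinite _
  have hcardK : Fintype.card (fixedSubfield (GaloisField p (2 * n)) p n) =
      Fintype.card (GaloisField p n) := by
    rw [← Nat.card_eq_fintype_card, ← Nat.card_eq_fintype_card,
      card_fixedSubfield p n hq (by omega) hcard, GaloisField.card p n (by omega)]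
  let EK := FiniteField.ringEquivOfCardEq hcardK
  have hmemc : ∀ a, cc (p ^ n) g a ∈ fixedSubfield (GaloisField p (2 * n)) p n :=
    fun a => (mem_fixedSubfield _).2 (cc_mem p n hq hgord a)
  have key' : ∀ a a', rr (p ^ n) a = rr (p ^ n) a' ↔ cc (p ^ n) g a = cc (p ^ n) g a' :=
    fun a a' => cc_key hq hgord a a'
  set B : ℝ → GaloisField p n := fun y =>
    if h : ∃ a, rr (p ^ n) a = y then EK ⟨cc (p ^ n) g h.choose, hmemc _⟩ else 0 with hBdef
  have hBval : ∀ (y : ℝ) (h : ∃ a, rr (p ^ n) a = y),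
      B y = EK ⟨cc (p ^ n) g h.choose, hmemc _⟩ := by
    intro y h
    rw [hBdef]
    exact dif_pos h
  have hBr : ∀ a, B (rr (p ^ n) a) = EK ⟨cc (p ^ n) g a, hmemc a⟩ := by
    intro a
    have hex : ∃ a', rr (p ^ n) a' = rr (p ^ n) a := ⟨a, rfl⟩
    rw [hBval _ hex]
    exact congrArg EK (Subtype.ext ((key' _ _).1 hex.choose_spec))
  have hSr : ∀ y : ℝ, y ∈ {y ∈ Set.Icc (-1 : ℝ) 1 | (T ℝ (p ^ n : ℕ)).eval y = y} ↔
      ∃ a, rr (p ^ n) a = y := by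
    intro y
    constructor
    · rintro ⟨h1, h2⟩
      exact rr_surj (p ^ n) hq h1 h2
    · rintro ⟨a, rfl⟩
      exact ⟨(rr_mem (p ^ n) hq a).1, (rr_mem (p ^ n) hq a).2⟩
  refine ⟨B, ⟨fun y _ => Set.mem_univ _, ?_, ?_⟩, ?_⟩
  · -- InjOn
    intro y1 hy1 y2 hy2 heq
    obtain ⟨a1, rfl⟩ := (hSr y1).1 hy1
    obtain ⟨a2, rfl⟩ := (hSr y2).1 hy2
    rw [hBr a1, hBr a2] at heq
    exact (key' a1 a2).2 (Subtype.ext_iff.1 (EK.injective heq))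
  · -- SurjOn
    intro z _
    obtain ⟨a, ha⟩ := cc_surj p n hq hcard hgmem ((mem_fixedSubfield _).1 (EK.symm z).2)
    refine ⟨rr (p ^ n) a, (hSr _).2 ⟨a, rfl⟩, ?_⟩
    rw [hBr a]
    have h2 : (⟨cc (p ^ n) g a, hmemc a⟩ : ↥(fixedSubfield (GaloisField p (2 * n)) p n)) =
        EK.symm z := Subtype.ext ha
    rw [h2]
    exact EK.apply_symm_apply z
  · -- Frobenius compatibility
    intro y hy
    obtain ⟨a, rfl⟩ := (hSr y).1 hy
    rw [hBr a, rr_frob (p ^ n) p a, hBr ((p : ℤ) * a.1, a.2)]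
    have h2 : (⟨cc (p ^ n) g ((p : ℤ) * a.1, a.2), hmemc _⟩ :
        ↥(fixedSubfield (GaloisField p (2 * n)) p n)) =
        (⟨cc (p ^ n) g a, hmemc a⟩ : ↥(fixedSubfield (GaloisField p (2 * n)) p n)) ^ p :=
      Subtype.ext (by rw [SubmonoidClass.coe_pow]; exact cc_frob p (p ^ n) g a)
    rw [h2, map_pow]
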